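/- Degraded-channel sum-rate inequality. Let (U, X) have an arbitrary joint pmf P_{UX} on finite alphabets, let S ~ P_S be independent of (U, X), let Y be generated from (X, S) via a channel P_{Y|XS}, and let Z be generated from Y via a channel P_{Z|Y} (so U − (X, S) − Y − Z is a Markov chain and the broadcast channel is degraded). Then I(U; Z) + I(X; Y | U, S) ≤ I(X; Y | S). -/

import Mathlib

open scoped BigOperators
open Filter

noncomputable section

/-- A probability mass function on a finite alphabet. -/
def IsPMF {α : Type*} [Fintype α] (p : α → ℝ) : Prop :=
  (∀ a, 0 ≤ p a) ∧ ∑ a, p a = 1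

/-- A joint probability mass function on a pair of finite alphabets. -/
def IsPMF2 {α β : Type*} [Fintype α] [Fintype β] (p : α → β → ℝ) : Prop :=
  (∀ a b, 0 ≤ p a b) ∧ ∑ a, ∑ b, p a b = 1

/-- A transition kernel (channel) with a single input. -/
def IsChan1 {α γ : Type*} [Fintype γ] (W : α → γ → ℝ) : Prop :=
  ∀ a, (∀ c, 0 ≤ W a c) ∧ ∑ c, W a c = 1

/-- A transition kernel (channel) with two inputs. -/
def IsChan2 {α β γ : Type*} [Fintype γ] (W : α → β → γ → ℝ) : Prop :=
  ∀ a b, (∀ c, 0 ≤ W a b c) ∧ ∑ c, W a b c = 1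

/-- Mutual information `I(A;B)` (in bits, i.e. logarithm base 2) of a joint pmf `p`. -/
def MI {A B : Type*} [Fintype A] [Fintype B] (p : A → B → ℝ) : ℝ :=
  ∑ a, ∑ b,
    if p a b = 0 then 0
    else p a b * Real.logb 2 (p a b / ((∑ b', p a b') * (∑ a', p a' b)))

/-- Conditional mutual information `I(A;B|C)` (in bits) of a joint pmf `p c a b`. -/
def CMI {C A B : Type*} [Fintype C] [Fintype A] [Fintype B] (p : C → A → B → ℝ) : ℝ :=
  ∑ c, ∑ a, ∑ b,
    if p c a b = 0 then 0
    else p c a b * Real.logb 2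
      ((∑ a', ∑ b', p c a' b') * p c a b / ((∑ b', p c a b') * (∑ a', p c a' b)))

section Rates

variable {U 𝓧 𝓢 𝓨 𝓩 : Type*} [Fintype U] [Fintype 𝓧] [Fintype 𝓢] [Fintype 𝓨] [Fintype 𝓩]

/-- `I(U;Z)` under the joint law `(S,U,X,Y,Z) ~ P_{UX}·P_S·P_{YZ|XS}`. -/
def rateIUZ (pUX : U → 𝓧 → ℝ) (pS : 𝓢 → ℝ) (W : 𝓧 → 𝓢 → 𝓨 × 𝓩 → ℝ) : ℝ :=
  MI (fun (u : U) (z : 𝓩) => ∑ s, ∑ x, ∑ y, pUX u x * pS s * W x s (y, z))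

/-- `I(X;Y|U,S)` under the joint law `(S,U,X,Y,Z) ~ P_{UX}·P_S·P_{YZ|XS}`. -/
def rateIXY_US (pUX : U → 𝓧 → ℝ) (pS : 𝓢 → ℝ) (W : 𝓧 → 𝓢 → 𝓨 × 𝓩 → ℝ) : ℝ :=
  CMI (fun (us : U × 𝓢) (x : 𝓧) (y : 𝓨) => pUX us.1 x * pS us.2 * ∑ z, W x us.2 (y, z))

/-- `I(U;Y|S)` under the joint law `(S,U,X,Y,Z) ~ P_{UX}·P_S·P_{YZ|XS}`. -/
def rateIUY_S (pUX : U → 𝓧 → ℝ) (pS : 𝓢 → ℝ) (W : 𝓧 → 𝓢 → 𝓨 × 𝓩 → ℝ) : ℝ :=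
  CMI (fun (s : 𝓢) (u : U) (y : 𝓨) => ∑ x, pUX u x * pS s * ∑ z, W x s (y, z))

/-- `I(X;Y|S)` for an input pmf `pX`, state pmf `pS` and channel `W`. -/
def rateIXY_S (pX : 𝓧 → ℝ) (pS : 𝓢 → ℝ) (W : 𝓧 → 𝓢 → 𝓨 × 𝓩 → ℝ) : ℝ :=
  CMI (fun (s : 𝓢) (x : 𝓧) (y : 𝓨) => pX x * pS s * ∑ z, W x s (y, z))

/-- `I(X;Z)` for an input pmf `pX`, state pmf `pS` and channel `W`. -/
def rateIXZ (pX : 𝓧 → ℝ) (pS : 𝓢 → ℝ) (W : 𝓧 → 𝓢 → 𝓨 × 𝓩 → ℝ) : ℝ :=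
  MI (fun (x : 𝓧) (z : 𝓩) => ∑ s, ∑ y, pX x * pS s * W x s (y, z))

/-- Expected distortion `∑_{u,x} P_{UX}(u,x)·c*(u) = ∑_{u,z} min_{s'} ∑_s P(s,u,z)·d(s,s')`
of the optimal one-shot estimator `ŝ*(u,z) = argmin_{s'} ∑_s P_{S|UZ}(s|u,z)·d(s,s')`
based on `(U,Z)`. -/
def optDistUZ [Nonempty 𝓢] (pUX : U → 𝓧 → ℝ) (pS : 𝓢 → ℝ)
    (W : 𝓧 → 𝓢 → 𝓨 × 𝓩 → ℝ) (d : 𝓢 → 𝓢 → ℝ) : ℝ :=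
  ∑ u : U, ∑ z : 𝓩, Finset.univ.inf' Finset.univ_nonempty
    (fun s' : 𝓢 => ∑ s, (∑ x, ∑ y, pUX u x * pS s * W x s (y, z)) * d s s')

/-- Expected distortion `∑_x P_X(x)·E[d(S, ŝ*(X,Z)) | X = x]` of the optimal one-shot
estimator `ŝ*(x,z) = argmin_{s'} ∑_s P_{S|XZ}(s|x,z)·d(s,s')` based on `(X,Z)`. -/
def optDistXZ [Nonempty 𝓢] (pX : 𝓧 → ℝ) (pS : 𝓢 → ℝ)
    (W : 𝓧 → 𝓢 → 𝓨 × 𝓩 → ℝ) (d : 𝓢 → 𝓢 → ℝ) : ℝ :=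
  ∑ x : 𝓧, ∑ z : 𝓩, Finset.univ.inf' Finset.univ_nonempty
    (fun s' : 𝓢 => ∑ s, (pX x * pS s * ∑ y, W x s (y, z)) * d s s')

/-- Expected distortion `∑_x P_X(x)·c1(x)` of the optimal one-shot estimator
`ŝ*(z) = argmin_{s'} ∑_s P_{S|Z}(s|z)·d(s,s')` based on `Z` alone. -/
def optDistZ [Nonempty 𝓢] (pX : 𝓧 → ℝ) (pS : 𝓢 → ℝ)
    (W : 𝓧 → 𝓢 → 𝓨 × 𝓩 → ℝ) (d : 𝓢 → 𝓢 → ℝ) : ℝ :=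
  ∑ z : 𝓩, Finset.univ.inf' Finset.univ_nonempty
    (fun s' : 𝓢 => ∑ s, (∑ x, pX x * pS s * ∑ y, W x s (y, z)) * d s s')

end Rates

/-- The physically degraded broadcast channel `P_{YZ|XS}(y,z|x,s) = P_{Y|XS}(y|x,s)·P_{Z|Y}(z|y)`. -/
def degW {𝓧 𝓢 𝓨 𝓩 : Type*} (Wy : 𝓧 → 𝓢 → 𝓨 → ℝ) (Wq : 𝓨 → 𝓩 → ℝ) :
    𝓧 → 𝓢 → 𝓨 × 𝓩 → ℝ :=
  fun x s yz => Wy x s yz.1 * Wq yz.1 yz.2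

section Codes

variable {𝓧 𝓢 𝓨 𝓩 : Type*} [Fintype 𝓢] [Fintype 𝓨] [Fintype 𝓩]

/-- Probability of the i.i.d. state sequence `sv` and channel outputs `(yv, zv)`
given the input sequence `xv`. -/
def seqProb (pS : 𝓢 → ℝ) (W : 𝓧 → 𝓢 → 𝓨 × 𝓩 → ℝ) {n : ℕ}
    (xv : Fin n → 𝓧) (sv : Fin n → 𝓢) (yv : Fin n → 𝓨) (zv : Fin n → 𝓩) : ℝ :=
  ∏ i, pS (sv i) * W (xv i) (sv i) (yv i, zv i)

/-- A `(M0, M1, n)` code for the SDMBC-DMS model: an encoder, a decoder at the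
communication receiver (observing `(Y^n, S^n)`), a decoder at the sensing receiver
(observing `Z^n`) for the common message, and a state estimator at the sensing receiver. -/
structure SDMBCCode (𝓧 𝓢 𝓨 𝓩 : Type*) (n M0 M1 : ℕ) where
  enc : Fin M0 → Fin M1 → Fin n → 𝓧
  dec1 : (Fin n → 𝓨) → (Fin n → 𝓢) → Fin M0 × Fin M1
  dec2 : (Fin n → 𝓩) → Fin M0
  est : (Fin n → 𝓩) → Fin n → 𝓢

/-- Average error probability `P_e^{(n)} = Pr{(Ŵ01,Ŵ1) ≠ (W0,W1) or Ŵ02 ≠ W0}` under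
uniform messages. -/
def errProbSDMBC (pS : 𝓢 → ℝ) (W : 𝓧 → 𝓢 → 𝓨 × 𝓩 → ℝ) {n M0 M1 : ℕ}
    (c : SDMBCCode 𝓧 𝓢 𝓨 𝓩 n M0 M1) : ℝ :=
  (1 / ((M0 : ℝ) * (M1 : ℝ))) * ∑ w0 : Fin M0, ∑ w1 : Fin M1, ∑ sv : Fin n → 𝓢,
    ∑ yv : Fin n → 𝓨, ∑ zv : Fin n → 𝓩,
      if c.dec1 yv sv ≠ (w0, w1) ∨ c.dec2 zv ≠ w0
      then seqProb pS W (c.enc w0 w1) sv yv zv else 0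

/-- Expected average per-block distortion `D^{(n)} = (1/n) ∑_i E[d(S_i, Ŝ_i)]`. -/
def avgDistSDMBC (pS : 𝓢 → ℝ) (W : 𝓧 → 𝓢 → 𝓨 × 𝓩 → ℝ) (d : 𝓢 → 𝓢 → ℝ)
    {n M0 M1 : ℕ} (c : SDMBCCode 𝓧 𝓢 𝓨 𝓩 n M0 M1) : ℝ :=
  (1 / ((M0 : ℝ) * (M1 : ℝ))) * ∑ w0 : Fin M0, ∑ w1 : Fin M1, ∑ sv : Fin n → 𝓢,
    ∑ yv : Fin n → 𝓨, ∑ zv : Fin n → 𝓩,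
      seqProb pS W (c.enc w0 w1) sv yv zv *
        ((1 / (n : ℝ)) * ∑ i, d (sv i) (c.est zv i))

/-- Achievability of a rate-distortion tuple `(R0, R1, D)` for the SDMBC-DMS model:
there is a sequence of `(2^{nR0}, 2^{nR1}, n)` codes with vanishing error probability
and asymptotic distortion at most `D`. -/
def AchievableSDMBC (pS : 𝓢 → ℝ) (W : 𝓧 → 𝓢 → 𝓨 × 𝓩 → ℝ) (d : 𝓢 → 𝓢 → ℝ)
    (R0 R1 D : ℝ) : Prop :=
  ∃ (M0 M1 : ℕ → ℕ) (c : ∀ n, SDMBCCode 𝓧 𝓢 𝓨 𝓩 n (M0 n) (M1 n)),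
    (∀ n : ℕ, (2 : ℝ) ^ ((n : ℝ) * R0) ≤ (M0 n : ℝ)) ∧
    (∀ n : ℕ, (2 : ℝ) ^ ((n : ℝ) * R1) ≤ (M1 n : ℝ)) ∧
    Tendsto (fun n => errProbSDMBC pS W (c n)) atTop (nhds 0) ∧
    Filter.limsup (fun n => avgDistSDMBC pS W d (c n)) atTop ≤ D

/-- A `(M, n)` code for the point-to-point setting (blind estimation): the sensing
receiver decodes nothing and estimates the state from `Z^n` alone. -/
structure P2PCode (𝓧 𝓢 𝓨 𝓩 : Type*) (n M : ℕ) where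
  enc : Fin M → Fin n → 𝓧
  dec : (Fin n → 𝓨) → (Fin n → 𝓢) → Fin M
  est : (Fin n → 𝓩) → Fin n → 𝓢

def errProbP2P (pS : 𝓢 → ℝ) (W : 𝓧 → 𝓢 → 𝓨 × 𝓩 → ℝ) {n M : ℕ}
    (c : P2PCode 𝓧 𝓢 𝓨 𝓩 n M) : ℝ :=
  (1 / (M : ℝ)) * ∑ w : Fin M, ∑ sv : Fin n → 𝓢, ∑ yv : Fin n → 𝓨, ∑ zv : Fin n → 𝓩,
    if c.dec yv sv ≠ w then seqProb pS W (c.enc w) sv yv zv else 0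

def avgDistP2P (pS : 𝓢 → ℝ) (W : 𝓧 → 𝓢 → 𝓨 × 𝓩 → ℝ) (d : 𝓢 → 𝓢 → ℝ)
    {n M : ℕ} (c : P2PCode 𝓧 𝓢 𝓨 𝓩 n M) : ℝ :=
  (1 / (M : ℝ)) * ∑ w : Fin M, ∑ sv : Fin n → 𝓢, ∑ yv : Fin n → 𝓨, ∑ zv : Fin n → 𝓩,
    seqProb pS W (c.enc w) sv yv zv * ((1 / (n : ℝ)) * ∑ i, d (sv i) (c.est zv i))

/-- Achievability of a rate-distortion pair `(R, D)` with blind estimation. -/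
def AchievableP2P (pS : 𝓢 → ℝ) (W : 𝓧 → 𝓢 → 𝓨 × 𝓩 → ℝ) (d : 𝓢 → 𝓢 → ℝ)
    (R D : ℝ) : Prop :=
  ∃ (M : ℕ → ℕ) (c : ∀ n, P2PCode 𝓧 𝓢 𝓨 𝓩 n (M n)),
    (∀ n : ℕ, (2 : ℝ) ^ ((n : ℝ) * R) ≤ (M n : ℝ)) ∧
    Tendsto (fun n => errProbP2P pS W (c n)) atTop (nhds 0) ∧
    Filter.limsup (fun n => avgDistP2P pS W d (c n)) atTop ≤ D

/-- A `(M, n)` code for the full-decoding setting: both receivers must decode the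
whole message; the sensing receiver estimates the state from `Z^n` (and hence may use
its decoded message, which is a function of `Z^n`). -/
structure FDCode (𝓧 𝓢 𝓨 𝓩 : Type*) (n M : ℕ) where
  enc : Fin M → Fin n → 𝓧
  dec1 : (Fin n → 𝓨) → (Fin n → 𝓢) → Fin M
  dec2 : (Fin n → 𝓩) → Fin M
  est : (Fin n → 𝓩) → Fin n → 𝓢

def errProbFD (pS : 𝓢 → ℝ) (W : 𝓧 → 𝓢 → 𝓨 × 𝓩 → ℝ) {n M : ℕ}
    (c : FDCode 𝓧 𝓢 𝓨 𝓩 n M) : ℝ :=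
  (1 / (M : ℝ)) * ∑ w : Fin M, ∑ sv : Fin n → 𝓢, ∑ yv : Fin n → 𝓨, ∑ zv : Fin n → 𝓩,
    if c.dec1 yv sv ≠ w ∨ c.dec2 zv ≠ w
    then seqProb pS W (c.enc w) sv yv zv else 0

def avgDistFD (pS : 𝓢 → ℝ) (W : 𝓧 → 𝓢 → 𝓨 × 𝓩 → ℝ) (d : 𝓢 → 𝓢 → ℝ)
    {n M : ℕ} (c : FDCode 𝓧 𝓢 𝓨 𝓩 n M) : ℝ :=
  (1 / (M : ℝ)) * ∑ w : Fin M, ∑ sv : Fin n → 𝓢, ∑ yv : Fin n → 𝓨, ∑ zv : Fin n → 𝓩,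
    seqProb pS W (c.enc w) sv yv zv * ((1 / (n : ℝ)) * ∑ i, d (sv i) (c.est zv i))

/-- Achievability of a rate-distortion pair `(R, D)` with full-decoding-based estimation. -/
def AchievableFD (pS : 𝓢 → ℝ) (W : 𝓧 → 𝓢 → 𝓨 × 𝓩 → ℝ) (d : 𝓢 → 𝓢 → ℝ)
    (R D : ℝ) : Prop :=
  ∃ (M : ℕ → ℕ) (c : ∀ n, FDCode 𝓧 𝓢 𝓨 𝓩 n (M n)),
    (∀ n : ℕ, (2 : ℝ) ^ ((n : ℝ) * R) ≤ (M n : ℝ)) ∧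
    Tendsto (fun n => errProbFD pS W (c n)) atTop (nhds 0) ∧
    Filter.limsup (fun n => avgDistFD pS W d (c n)) atTop ≤ D

end Codes

/-- The binary alphabet `{0,1}` (with mod-2 arithmetic). -/
abbrev Bin : Type := ZMod 2

/-- `Bernoulli(q)` state pmf: `P(S = 1) = q`. -/
def bern (q : ℝ) : Bin → ℝ := fun s => if s = 1 then q else 1 - q

/-- Input pmf with `P(X = 0) = p`. -/
def pmfX (p : ℝ) : Bin → ℝ := fun x => if x = 0 then p else 1 - p

/-- Hamming distortion `d(s, ŝ) = s ⊕ ŝ`. -/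
def hamming : Bin → Bin → ℝ := fun s t => if s = t then 0 else 1

/-- The binary entropy function `H2(t) = −t·log2 t − (1−t)·log2 (1−t)`. -/
def H2 (t : ℝ) : ℝ := -(t * Real.logb 2 t) - (1 - t) * Real.logb 2 (1 - t)

/-- The channel of Example 1: `Y = S·X` and `Z = a·S·X + ((X + N) mod 2)` with
`N ~ Bernoulli(e)`.  Since `a ∈ (0,1)`, the value `Z` is faithfully encoded by the pair
`(S·X, (X + N) mod 2) ∈ Bin × Bin` (the real values `0, 1, a, a+1` correspond to the
pairs `(0,0), (0,1), (1,0), (1,1)` respectively). -/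
def ex1W (e : ℝ) : Bin → Bin → Bin × (Bin × Bin) → ℝ := fun x s yz =>
  (if yz.1 = s * x then 1 else 0) * (if yz.2.1 = s * x then 1 else 0) *
    (if yz.2.2 = x then 1 - e else e)

/-- The channel of Example 2 (degraded): `Y = S·X` and
`Z = a·Y + ((Y + N) mod 2)` with `N ~ Bernoulli(e)`, encoded by the pair
`(S·X, (S·X + N) mod 2) ∈ Bin × Bin`. -/
def ex2W (e : ℝ) : Bin → Bin → Bin × (Bin × Bin) → ℝ := fun x s yz =>
  (if yz.1 = s * x then 1 else 0) * (if yz.2.1 = s * x then 1 else 0) *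
    (if yz.2.2 = s * x then 1 - e else e)


/-- Auxiliary: guarded `p · log₂ r`. -/
noncomputable def phi (p r : ℝ) : ℝ := if p = 0 then 0 else p * Real.logb 2 r

lemma phi_sum {ι : Type*} (s : Finset ι) (q : ι → ℝ) (hq : ∀ i ∈ s, 0 ≤ q i) (r : ℝ) :
    phi (∑ i ∈ s, q i) r = ∑ i ∈ s, phi (q i) r := by
  by_cases h : (∑ i ∈ s, q i) = 0
  · rw [h]
    simp only [phi, if_pos rfl]
    symm; apply Finset.sum_eq_zero; intro i hi
    have := (Finset.sum_eq_zero_iff_of_nonneg hq).1 h i hi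
    simp [this]
  · rw [phi, if_neg h, Finset.sum_mul]
    apply Finset.sum_congr rfl; intro i hi
    by_cases hqi : q i = 0
    · simp [phi, hqi]
    · simp [phi, hqi]

lemma phi_split (p r1 r2 r3 r4 : ℝ)
    (h : p ≠ 0 → 0 < r2 ∧ 0 < r3 ∧ 0 < r4 ∧ r1 = r2 * r3 * r4) :
    phi p r1 = phi p r2 + phi p r3 + phi p r4 := by
  by_cases hp : p = 0
  · simp [phi, hp]
  obtain ⟨h2, h3, h4, he⟩ := h hp
  simp only [phi, if_neg hp, he]
  rw [Real.logb_mul (by positivity) (ne_of_gt h4), Real.logb_mul (ne_of_gt h2) (ne_of_gt h3)]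
  ring

lemma gibbs {A B : Type*} [Fintype A] [Fintype B] (f : A → B → ℝ) (hf : ∀ a b, 0 ≤ f a b) :
    0 ≤ ∑ a, ∑ b, phi (f a b)
      ((∑ a', ∑ b', f a' b') * f a b / ((∑ b', f a b') * (∑ a', f a' b))) := by
  set T : ℝ := ∑ a', ∑ b', f a' b' with hT
  have hTnn : 0 ≤ T := Finset.sum_nonneg fun a _ => Finset.sum_nonneg fun b _ => hf a b
  by_cases hT0 : T = 0
  · have hz : ∀ a b, f a b = 0 := by
      intro a b
      have h2 := (Finset.sum_eq_zero_iff_of_nonneg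
        (fun a _ => Finset.sum_nonneg fun b _ => hf a b)).1 hT0 a (Finset.mem_univ a)
      exact (Finset.sum_eq_zero_iff_of_nonneg (fun b _ => hf a b)).1 h2 b (Finset.mem_univ b)
    apply le_of_eq; symm
    apply Finset.sum_eq_zero; intro a _
    apply Finset.sum_eq_zero; intro b _
    simp [phi, hz a b]
  · have hTpos : 0 < T := lt_of_le_of_ne hTnn (Ne.symm hT0)
    have hlog2 : 0 < Real.log 2 := Real.log_pos one_lt_two
    have key : ∀ a b,
        (f a b - (∑ b', f a b') * (∑ a', f a' b) / T) / Real.log 2 ≤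
        phi (f a b) (T * f a b / ((∑ b', f a b') * (∑ a', f a' b))) := by
      intro a b
      have hra : 0 ≤ ∑ b', f a b' := Finset.sum_nonneg fun b _ => hf a b
      have hcb : 0 ≤ ∑ a', f a' b := Finset.sum_nonneg fun a _ => hf a b
      by_cases hab : f a b = 0
      · simp only [phi, if_pos hab, hab]
        apply div_nonpos_of_nonpos_of_nonneg _ hlog2.le
        have : 0 ≤ (∑ b', f a b') * (∑ a', f a' b) / T := by positivity
        linarith
      · have hfpos : 0 < f a b := lt_of_le_of_ne (hf a b) (Ne.symm hab)
        have hrapos : 0 < ∑ b', f a b' :=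
          lt_of_lt_of_le hfpos (Finset.single_le_sum (fun b _ => hf a b) (Finset.mem_univ b))
        have hcbpos : 0 < ∑ a', f a' b :=
          lt_of_lt_of_le hfpos (Finset.single_le_sum (fun a _ => hf a b) (Finset.mem_univ a))
        rw [phi, if_neg hab, Real.logb]
        have heq : f a b * (Real.log (T * f a b / ((∑ b', f a b') * (∑ a', f a' b))) / Real.log 2)
            = (f a b * Real.log (T * f a b / ((∑ b', f a b') * (∑ a', f a' b)))) / Real.log 2 :=
          (mul_div_assoc _ _ _).symm
        rw [heq]
        rw [div_le_div_iff_of_pos_right hlog2]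
        have hR : Real.log (T * f a b / ((∑ b', f a b') * (∑ a', f a' b)))
            = - Real.log (((∑ b', f a b') * (∑ a', f a' b)) / (T * f a b)) := by
          rw [← Real.log_inv, inv_div]
        have h1 : Real.log (((∑ b', f a b') * (∑ a', f a' b)) / (T * f a b))
            ≤ ((∑ b', f a b') * (∑ a', f a' b)) / (T * f a b) - 1 :=
          Real.log_le_sub_one_of_pos (by positivity)
        have h3 : f a b * (((∑ b', f a b') * (∑ a', f a' b)) / (T * f a b))
            = (∑ b', f a b') * (∑ a', f a' b) / T := by
          field_simp
        have h4 := mul_le_mul_of_nonneg_left h1 hfpos.le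
        rw [mul_sub, h3, mul_one] at h4
        rw [hR, mul_neg]
        linarith
    have hsum : ∑ a, ∑ b, (f a b - (∑ b', f a b') * (∑ a', f a' b) / T) / Real.log 2
        = 0 := by
      have hc : (∑ b, ∑ a, f a b) = T := Finset.sum_comm
      have h5 : ∀ a : A, (∑ b, (∑ b', f a b') * (∑ a', f a' b) / T)
          = (∑ b', f a b') * T / T := by
        intro a
        rw [← Finset.sum_div, ← Finset.mul_sum, hc]
      have h6 : (∑ a, ∑ b, (∑ b', f a b') * (∑ a', f a' b) / T) = T := by
        rw [Finset.sum_congr rfl fun a _ => h5 a]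
        rw [← Finset.sum_div, ← Finset.sum_mul, ← hT]
        rw [mul_div_assoc, div_self hT0, mul_one]
      calc ∑ a, ∑ b, (f a b - (∑ b', f a b') * (∑ a', f a' b) / T) / Real.log 2
          = (∑ a, ∑ b, (f a b - (∑ b', f a b') * (∑ a', f a' b) / T)) / Real.log 2 := by
            simp only [← Finset.sum_div]
        _ = (T - T) / Real.log 2 := by
            simp only [Finset.sum_sub_distrib]
            rw [h6, ← hT]
        _ = 0 := by simp
    calc (0:ℝ) = ∑ a, ∑ b, (f a b - (∑ b', f a b') * (∑ a', f a' b) / T) / Real.log 2 :=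
          hsum.symm
      _ ≤ _ := Finset.sum_le_sum fun a _ => Finset.sum_le_sum fun b _ => key a b

lemma cmi_nonneg {C A B : Type*} [Fintype C] [Fintype A] [Fintype B] (p : C → A → B → ℝ)
    (hp : ∀ c a b, 0 ≤ p c a b) : 0 ≤ CMI p :=
  Finset.sum_nonneg fun c _ => gibbs (p c) (hp c)

lemma sum_pos_of_mem {ι : Type*} [Fintype ι] (f : ι → ℝ) (hnn : ∀ i, 0 ≤ f i) (i : ι)
    (h : 0 < f i) : 0 < ∑ j, f j :=
  lt_of_lt_of_le h (Finset.single_le_sum (fun j _ => hnn j) (Finset.mem_univ i))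

lemma push_in_3 {α β γ δ : Type*} [Fintype α] [Fintype β] [Fintype γ] [Fintype δ]
    (f : α → β → γ → δ → ℝ) :
    ∑ a, ∑ b, ∑ c, ∑ d, f a b c d = ∑ b, ∑ c, ∑ d, ∑ a, f a b c d := by
  rw [Finset.sum_comm]
  refine Finset.sum_congr rfl fun b _ => ?_
  rw [Finset.sum_comm]
  refine Finset.sum_congr rfl fun c _ => ?_
  exact Finset.sum_comm

lemma push_in_4 {α β γ δ ε : Type*} [Fintype α] [Fintype β] [Fintype γ] [Fintype δ] [Fintype ε]
    (f : α → β → γ → δ → ε → ℝ) :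
    ∑ a, ∑ b, ∑ c, ∑ d, ∑ e, f a b c d e = ∑ b, ∑ c, ∑ d, ∑ e, ∑ a, f a b c d e := by
  rw [Finset.sum_comm]
  refine Finset.sum_congr rfl fun b _ => ?_
  exact push_in_3 (fun a => f a b)

lemma combine5 {υ σ χ ζ ω : Type*} [Fintype υ] [Fintype σ] [Fintype χ] [Fintype ζ] [Fintype ω]
    (F G H K : υ → σ → χ → ζ → ω → ℝ)
    (hpt : ∀ u s x y z, F u s x y z = G u s x y z + H u s x y z + K u s x y z) :
    (∑ s, ∑ x, ∑ y, ∑ u, ∑ z, F u s x y z)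
      = ((∑ u, ∑ z, ∑ s, ∑ x, ∑ y, G u s x y z)
        + (∑ u, ∑ s, ∑ x, ∑ y, ∑ z, H u s x y z))
        + (∑ z, ∑ u, ∑ s, ∑ y, ∑ x, K u s x y z) := by
  have hG : (∑ u, ∑ z, ∑ s, ∑ x, ∑ y, G u s x y z)
      = ∑ s, ∑ x, ∑ y, ∑ u, ∑ z, G u s x y z := by
    calc ∑ u, ∑ z, ∑ s, ∑ x, ∑ y, G u s x y z
        = ∑ u, ∑ s, ∑ x, ∑ y, ∑ z, G u s x y z :=
          Finset.sum_congr rfl fun u _ => push_in_3 (fun z s x y => G u s x y z)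
      _ = ∑ s, ∑ x, ∑ y, ∑ z, ∑ u, G u s x y z := push_in_4 _
      _ = ∑ s, ∑ x, ∑ y, ∑ u, ∑ z, G u s x y z :=
          Finset.sum_congr rfl fun s _ => Finset.sum_congr rfl fun x _ =>
            Finset.sum_congr rfl fun y _ => Finset.sum_comm
  have hH : (∑ u, ∑ s, ∑ x, ∑ y, ∑ z, H u s x y z)
      = ∑ s, ∑ x, ∑ y, ∑ u, ∑ z, H u s x y z := by
    calc ∑ u, ∑ s, ∑ x, ∑ y, ∑ z, H u s x y z
        = ∑ s, ∑ x, ∑ y, ∑ z, ∑ u, H u s x y z := push_in_4 _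
      _ = ∑ s, ∑ x, ∑ y, ∑ u, ∑ z, H u s x y z :=
          Finset.sum_congr rfl fun s _ => Finset.sum_congr rfl fun x _ =>
            Finset.sum_congr rfl fun y _ => Finset.sum_comm
  have hK : (∑ z, ∑ u, ∑ s, ∑ y, ∑ x, K u s x y z)
      = ∑ s, ∑ x, ∑ y, ∑ u, ∑ z, K u s x y z := by
    calc ∑ z, ∑ u, ∑ s, ∑ y, ∑ x, K u s x y z
        = ∑ z, ∑ u, ∑ s, ∑ x, ∑ y, K u s x y z :=
          Finset.sum_congr rfl fun z _ => Finset.sum_congr rfl fun u _ =>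
            Finset.sum_congr rfl fun s _ => Finset.sum_comm
      _ = ∑ u, ∑ s, ∑ x, ∑ y, ∑ z, K u s x y z := push_in_4 _
      _ = ∑ s, ∑ x, ∑ y, ∑ z, ∑ u, K u s x y z := push_in_4 _
      _ = ∑ s, ∑ x, ∑ y, ∑ u, ∑ z, K u s x y z :=
          Finset.sum_congr rfl fun s _ => Finset.sum_congr rfl fun x _ =>
            Finset.sum_congr rfl fun y _ => Finset.sum_comm
  rw [hG, hH, hK]
  simp only [← Finset.sum_add_distrib]
  exact Finset.sum_congr rfl fun s _ => Finset.sum_congr rfl fun x _ =>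
    Finset.sum_congr rfl fun y _ => Finset.sum_congr rfl fun u _ =>
      Finset.sum_congr rfl fun z _ => hpt u s x y z

/-- **Degraded-channel sum-rate inequality.**
If `S ~ P_S` is independent of `(U, X)`, `Y` is generated from `(X, S)` via `P_{Y|XS}`
and `Z` from `Y` via `P_{Z|Y}` (so `U − (X,S) − Y − Z` is a Markov chain), then
`I(U;Z) + I(X;Y|U,S) ≤ I(X;Y|S)`. -/
theorem degraded_sum_rate_inequality
    {U 𝓧 𝓢 𝓨 𝓩 : Type*} [Fintype U] [Fintype 𝓧] [Fintype 𝓢] [Fintype 𝓨] [Fintype 𝓩]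
    (pUX : U → 𝓧 → ℝ) (hpUX : IsPMF2 pUX)
    (pS : 𝓢 → ℝ) (hpS : IsPMF pS)
    (Wy : 𝓧 → 𝓢 → 𝓨 → ℝ) (hWy : IsChan2 Wy)
    (Wq : 𝓨 → 𝓩 → ℝ) (hWq : IsChan1 Wq) :
    rateIUZ pUX pS (degW Wy Wq) + rateIXY_US pUX pS (degW Wy Wq) ≤
      rateIXY_S (fun x => ∑ u, pUX u x) pS (degW Wy Wq) := by
  obtain ⟨hUXnn, hUX1⟩ := hpUX
  obtain ⟨hSnn, hS1⟩ := hpS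
  have hWynn : ∀ x s y, 0 ≤ Wy x s y := fun x s y => (hWy x s).1 y
  have hWy1 : ∀ x s, (∑ y, Wy x s y) = 1 := fun x s => (hWy x s).2
  have hWqnn : ∀ y z, 0 ≤ Wq y z := fun y z => (hWq y).1 z
  have hWq1 : ∀ y, (∑ z, Wq y z) = 1 := fun y => (hWq y).2
  have hPnn : ∀ u s x y z, 0 ≤ pUX u x * pS s * (Wy x s y * Wq y z) := fun u s x y z =>
    mul_nonneg (mul_nonneg (hUXnn u x) (hSnn s)) (mul_nonneg (hWynn x s y) (hWqnn y z))
  have hXsum : (∑ x, ∑ u, pUX u x) = 1 := Finset.sum_comm.trans hUX1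
  have hdeg2 : ∀ x s y z, degW Wy Wq x s (y, z) = Wy x s y * Wq y z := fun _ _ _ _ => rfl
  have hdegY : ∀ x s y, (∑ z, Wy x s y * Wq y z) = Wy x s y := by
    intro x s y
    rw [← Finset.mul_sum, hWq1 y, mul_one]
  have hdeg : ∀ x s y, (∑ z, degW Wy Wq x s (y, z)) = Wy x s y := by
    intro x s y
    show (∑ z, Wy x s y * Wq y z) = Wy x s y
    exact hdegY x s y
  -- basic marginal computations
  have hE2 : ∀ u s x y, (∑ z, pUX u x * pS s * (Wy x s y * Wq y z)) = pUX u x * pS s * Wy x s y := by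
    intro u s x y
    rw [← Finset.mul_sum, hdegY x s y]
  have hE3 : ∀ s x y, (∑ u, ∑ z, pUX u x * pS s * (Wy x s y * Wq y z)) = (∑ u', pUX u' x) * pS s * Wy x s y := by
    intro s x y
    rw [Finset.sum_congr rfl fun u _ => hE2 u s x y]
    rw [← Finset.sum_mul, ← Finset.sum_mul]
  have hE4 : ∀ u s y z, (∑ x, pUX u x * pS s * (Wy x s y * Wq y z)) = pS s * (∑ x', pUX u x' * Wy x' s y) * Wq y z := by
    intro u s y z
    calc ∑ x, pUX u x * pS s * (Wy x s y * Wq y z)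
        = ∑ x, (pUX u x * Wy x s y) * (pS s * Wq y z) :=
          Finset.sum_congr rfl fun x _ => by ring
      _ = (∑ x', pUX u x' * Wy x' s y) * (pS s * Wq y z) := by rw [← Finset.sum_mul]
      _ = _ := by ring
  have m2y : ∀ u s x, (∑ y, pUX u x * pS s * Wy x s y) = pUX u x * pS s := by
    intro u s x
    rw [← Finset.mul_sum, hWy1 x s, mul_one]
  have m2xy : ∀ u s, (∑ x, ∑ y, pUX u x * pS s * Wy x s y) = (∑ x', pUX u x') * pS s := by
    intro u s
    rw [Finset.sum_congr rfl fun x _ => m2y u s x, ← Finset.sum_mul]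
  have m2x : ∀ u s y, (∑ x, pUX u x * pS s * Wy x s y) = pS s * (∑ x', pUX u x' * Wy x' s y) := by
    intro u s y
    calc ∑ x, pUX u x * pS s * Wy x s y
        = ∑ x, pS s * (pUX u x * Wy x s y) := Finset.sum_congr rfl fun x _ => by ring
      _ = _ := by rw [← Finset.mul_sum]
  have m3y : ∀ s x, (∑ y, (∑ u', pUX u' x) * pS s * Wy x s y) = (∑ u', pUX u' x) * pS s := by
    intro s x
    rw [← Finset.mul_sum, hWy1 x s, mul_one]
  have m3xy : ∀ s, (∑ x, ∑ y, (∑ u', pUX u' x) * pS s * Wy x s y) = pS s := by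
    intro s
    rw [Finset.sum_congr rfl fun x _ => m3y s x, ← Finset.sum_mul, hXsum, one_mul]
  have m3x : ∀ s y, (∑ x, (∑ u', pUX u' x) * pS s * Wy x s y) = pS s * (∑ x', (∑ u', pUX u' x') * Wy x' s y) := by
    intro s y
    calc ∑ x, (∑ u', pUX u' x) * pS s * Wy x s y
        = ∑ x, pS s * ((∑ u', pUX u' x) * Wy x s y) := Finset.sum_congr rfl fun x _ => by ring
      _ = _ := by rw [← Finset.mul_sum]
  have q1 : ∀ u, (∑ z, ∑ s, ∑ x, ∑ y, pUX u x * pS s * (Wy x s y * Wq y z)) = (∑ x', pUX u x') := by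
    intro u
    calc ∑ z, ∑ s, ∑ x, ∑ y, pUX u x * pS s * (Wy x s y * Wq y z)
        = ∑ s, ∑ x, ∑ y, ∑ z, pUX u x * pS s * (Wy x s y * Wq y z) := push_in_3 _
      _ = ∑ s, ∑ x, ∑ y, pUX u x * pS s * Wy x s y :=
          Finset.sum_congr rfl fun s _ => Finset.sum_congr rfl fun x _ =>
            Finset.sum_congr rfl fun y _ => hE2 u s x y
      _ = ∑ s, (∑ x', pUX u x') * pS s := Finset.sum_congr rfl fun s _ => m2xy u s
      _ = (∑ x', pUX u x') * ∑ s, pS s := by rw [← Finset.mul_sum]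
      _ = (∑ x', pUX u x') := by rw [hS1, mul_one]
  have j2 : ∀ u z, (∑ s, ∑ y, pS s * (∑ x', pUX u x' * Wy x' s y) * Wq y z)
      = ∑ s, ∑ x, ∑ y, pUX u x * pS s * (Wy x s y * Wq y z) := by
    intro u z
    refine Finset.sum_congr rfl fun s _ => ?_
    refine Eq.symm ?_
    rw [Finset.sum_comm]
    exact Finset.sum_congr rfl fun y _ => hE4 u s y z
  have j3 : ∀ s y z, (∑ u, pS s * (∑ x', pUX u x' * Wy x' s y) * Wq y z)
      = pS s * (∑ x', (∑ u', pUX u' x') * Wy x' s y) * Wq y z := by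
    intro s y z
    calc ∑ u, pS s * (∑ x', pUX u x' * Wy x' s y) * Wq y z
        = ∑ u, (∑ x', pUX u x' * Wy x' s y) * (pS s * Wq y z) :=
          Finset.sum_congr rfl fun u _ => by ring
      _ = (∑ u, ∑ x', pUX u x' * Wy x' s y) * (pS s * Wq y z) := by rw [← Finset.sum_mul]
      _ = (∑ x', ∑ u, pUX u x' * Wy x' s y) * (pS s * Wq y z) := by rw [Finset.sum_comm]
      _ = (∑ x', (∑ u', pUX u' x') * Wy x' s y) * (pS s * Wq y z) := by
          rw [Finset.sum_congr rfl fun x' _ => (Finset.sum_mul _ _ _).symm]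
      _ = _ := by ring
  -- closed forms for the three rates and the auxiliary CMI
  have e1 : rateIUZ pUX pS (degW Wy Wq)
      = ∑ u, ∑ z, phi (∑ s', ∑ x', ∑ y', pUX u x' * pS s' * (Wy x' s' y' * Wq y' z)) ((∑ s', ∑ x', ∑ y', pUX u x' * pS s' * (Wy x' s' y' * Wq y' z)) / ((∑ x', pUX u x') * (∑ u', (∑ s', ∑ x', ∑ y', pUX u' x' * pS s' * (Wy x' s' y' * Wq y' z))))) := by
    simp only [rateIUZ, MI, hdeg2]
    simp only [q1]
    simp only [phi]
  have e2 : rateIXY_US pUX pS (degW Wy Wq)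
      = ∑ u, ∑ s, ∑ x, ∑ y, phi (pUX u x * pS s * Wy x s y) (((∑ x', pUX u x') * pS s) * (pUX u x * pS s * Wy x s y) / ((pUX u x * pS s) * (pS s * (∑ x', pUX u x' * Wy x' s y)))) := by
    simp only [rateIXY_US, CMI, hdeg]
    rw [Fintype.sum_prod_type]
    simp only [m2xy]
    simp only [m2y]
    simp only [m2x]
    simp only [phi]
  have e3 : rateIXY_S (fun x => ∑ u, pUX u x) pS (degW Wy Wq)
      = ∑ s, ∑ x, ∑ y, phi ((∑ u', pUX u' x) * pS s * Wy x s y) (pS s * ((∑ u', pUX u' x) * pS s * Wy x s y) / (((∑ u', pUX u' x) * pS s) * (pS s * (∑ x', (∑ u', pUX u' x') * Wy x' s y)))) := by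
    simp only [rateIXY_S, CMI, hdeg]
    simp only [m3xy]
    simp only [m3y]
    simp only [m3x]
    simp only [phi]
  have e4 : CMI (fun (z : 𝓩) (u : U) (sy : 𝓢 × 𝓨) =>
        pS sy.1 * (∑ x', pUX u x' * Wy x' sy.1 sy.2) * Wq sy.2 z)
      = ∑ z, ∑ u, ∑ s, ∑ y, phi (pS s * (∑ x', pUX u x' * Wy x' s y) * Wq y z) ((∑ u', (∑ s', ∑ x', ∑ y', pUX u' x' * pS s' * (Wy x' s' y' * Wq y' z))) * (pS s * (∑ x', pUX u x' * Wy x' s y) * Wq y z) / ((∑ s', ∑ x', ∑ y', pUX u x' * pS s' * (Wy x' s' y' * Wq y' z)) * (pS s * (∑ x', (∑ u', pUX u' x') * Wy x' s y) * Wq y z))) := by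
    simp only [CMI]
    simp only [Fintype.sum_prod_type]
    simp only [j2]
    simp only [j3]
    simp only [phi]
  -- expansions of phi over the full joint distribution
  have expand1 : ∀ u z r, phi (∑ s', ∑ x', ∑ y', pUX u x' * pS s' * (Wy x' s' y' * Wq y' z)) r
      = ∑ s, ∑ x, ∑ y, phi (pUX u x * pS s * (Wy x s y * Wq y z)) r := by
    intro u z r
    rw [phi_sum _ _ (fun s _ => Finset.sum_nonneg fun x _ => Finset.sum_nonneg fun y _ =>
      hPnn u s x y z) r]
    refine Finset.sum_congr rfl fun s _ => ?_
    rw [phi_sum _ _ (fun x _ => Finset.sum_nonneg fun y _ => hPnn u s x y z) r]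
    exact Finset.sum_congr rfl fun x _ => phi_sum _ _ (fun y _ => hPnn u s x y z) r
  have expand2 : ∀ u s x y r, phi (pUX u x * pS s * Wy x s y) r
      = ∑ z, phi (pUX u x * pS s * (Wy x s y * Wq y z)) r := by
    intro u s x y r
    rw [← hE2 u s x y]
    exact phi_sum _ _ (fun z _ => hPnn u s x y z) r
  have expand3 : ∀ s x y r, phi ((∑ u', pUX u' x) * pS s * Wy x s y) r
      = ∑ u, ∑ z, phi (pUX u x * pS s * (Wy x s y * Wq y z)) r := by
    intro s x y r
    rw [← hE3 s x y]
    rw [phi_sum _ _ (fun u _ => Finset.sum_nonneg fun z _ => hPnn u s x y z) r]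
    exact Finset.sum_congr rfl fun u _ => phi_sum _ _ (fun z _ => hPnn u s x y z) r
  have expand4 : ∀ u s y z r, phi (pS s * (∑ x', pUX u x' * Wy x' s y) * Wq y z) r
      = ∑ x, phi (pUX u x * pS s * (Wy x s y * Wq y z)) r := by
    intro u s y z r
    rw [← hE4 u s y z]
    exact phi_sum _ _ (fun x _ => hPnn u s x y z) r
  -- the main identity
  have hJnn : ∀ (z : 𝓩) (u : U) (sy : 𝓢 × 𝓨),
      0 ≤ pS sy.1 * (∑ x', pUX u x' * Wy x' sy.1 sy.2) * Wq sy.2 z := fun z u sy =>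
    mul_nonneg (mul_nonneg (hSnn sy.1) (Finset.sum_nonneg fun x' _ =>
      mul_nonneg (hUXnn u x') (hWynn x' sy.1 sy.2))) (hWqnn sy.2 z)
  suffices key : rateIXY_S (fun x => ∑ u, pUX u x) pS (degW Wy Wq)
      = (rateIUZ pUX pS (degW Wy Wq) + rateIXY_US pUX pS (degW Wy Wq))
        + CMI (fun (z : 𝓩) (u : U) (sy : 𝓢 × 𝓨) =>
            pS sy.1 * (∑ x', pUX u x' * Wy x' sy.1 sy.2) * Wq sy.2 z) by
    have hcmi := cmi_nonneg _ hJnn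
    linarith
  rw [e1, e2, e3, e4]
  simp only [expand1, expand2, expand3, expand4]
  refine combine5 _ _ _ _ ?_
  intro u s x y z
  refine phi_split _ _ _ _ _ ?_
  intro hP
  obtain ⟨h12, h34⟩ := mul_ne_zero_iff.1 hP
  obtain ⟨hne1, hne2⟩ := mul_ne_zero_iff.1 h12
  obtain ⟨hne3, hne4⟩ := mul_ne_zero_iff.1 h34
  have hp1 : 0 < pUX u x := lt_of_le_of_ne (hUXnn u x) (Ne.symm hne1)
  have hp2 : 0 < pS s := lt_of_le_of_ne (hSnn s) (Ne.symm hne2)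
  have hp3 : 0 < Wy x s y := lt_of_le_of_ne (hWynn x s y) (Ne.symm hne3)
  have hp4 : 0 < Wq y z := lt_of_le_of_ne (hWqnn y z) (Ne.symm hne4)
  have posPX : 0 < (∑ u', pUX u' x) := sum_pos_of_mem _ (fun u' => hUXnn u' x) u hp1
  have posPU : 0 < (∑ x', pUX u x') := sum_pos_of_mem _ (fun x' => hUXnn u x') x hp1
  have posAF : 0 < (∑ x', pUX u x' * Wy x' s y) :=
    sum_pos_of_mem _ (fun x' => mul_nonneg (hUXnn u x') (hWynn x' s y)) x (mul_pos hp1 hp3)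
  have posBF : 0 < (∑ x', (∑ u', pUX u' x') * Wy x' s y) :=
    sum_pos_of_mem _ (fun x' => mul_nonneg (Finset.sum_nonneg fun u' _ => hUXnn u' x')
      (hWynn x' s y)) x (mul_pos posPX hp3)
  have posP : 0 < pUX u x * pS s * (Wy x s y * Wq y z) := mul_pos (mul_pos hp1 hp2) (mul_pos hp3 hp4)
  have posPUZ : 0 < (∑ s', ∑ x', ∑ y', pUX u x' * pS s' * (Wy x' s' y' * Wq y' z)) := by
    refine sum_pos_of_mem _ (fun s' => Finset.sum_nonneg fun x' _ =>
      Finset.sum_nonneg fun y' _ => hPnn u s' x' y' z) s ?_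
    refine sum_pos_of_mem _ (fun x' => Finset.sum_nonneg fun y' _ => hPnn u s x' y' z) x ?_
    exact sum_pos_of_mem _ (fun y' => hPnn u s x y' z) y posP
  have posPZ : 0 < (∑ u', (∑ s', ∑ x', ∑ y', pUX u' x' * pS s' * (Wy x' s' y' * Wq y' z))) :=
    sum_pos_of_mem _ (fun u' => Finset.sum_nonneg fun s' _ =>
      Finset.sum_nonneg fun x' _ => Finset.sum_nonneg fun y' _ => hPnn u' s' x' y' z) u posPUZ
  have nzPX : (∑ u', pUX u' x) ≠ 0 := ne_of_gt posPX
  have nzPU : (∑ x', pUX u x') ≠ 0 := ne_of_gt posPU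
  have nzAF : (∑ x', pUX u x' * Wy x' s y) ≠ 0 := ne_of_gt posAF
  have nzBF : (∑ x', (∑ u', pUX u' x') * Wy x' s y) ≠ 0 := ne_of_gt posBF
  have nzPUZ : (∑ s', ∑ x', ∑ y', pUX u x' * pS s' * (Wy x' s' y' * Wq y' z)) ≠ 0 := ne_of_gt posPUZ
  have nzPZ : (∑ u', (∑ s', ∑ x', ∑ y', pUX u' x' * pS s' * (Wy x' s' y' * Wq y' z))) ≠ 0 := ne_of_gt posPZ
  refine ⟨?_, ?_, ?_, ?_⟩
  · exact div_pos posPUZ (mul_pos posPU posPZ)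
  · exact div_pos (mul_pos (mul_pos posPU hp2) (mul_pos (mul_pos hp1 hp2) hp3))
      (mul_pos (mul_pos hp1 hp2) (mul_pos hp2 posAF))
  · exact div_pos (mul_pos posPZ (mul_pos (mul_pos hp2 posAF) hp4))
      (mul_pos posPUZ (mul_pos (mul_pos hp2 posBF) hp4))
  · field_simp
    have hA : (∑ x, ∑ x_1, ∑ x_2, pUX u x_1 * pS x * Wy x_1 x x_2 * Wq x_2 z) ≠ 0 := by
      simpa only [mul_assoc] using nzPUZ
    have hB : (∑ x, ∑ x_1, ∑ x_2, ∑ x_3, pUX x x_2 * pS x_1 * Wy x_2 x_1 x_3 * Wq x_3 z) ≠ 0 := by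
      simpa only [mul_assoc] using nzPZ
    rw [div_self (mul_ne_zero hA hB)]


end
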